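/- Let u_1, …, u_d ∈ ℝ^d be linearly independent vectors, let 0 ≤ k ≤ d, let C = {∑_{i=1}^d λ_i u_i : λ_1,…,λ_k > 0, λ_{k+1},…,λ_d ≥ 0} and Π = {∑_{i=1}^d λ_i u_i : λ_i ∈ (0,1] for 1 ≤ i ≤ k, λ_i ∈ [0,1) for k < i ≤ d}. Then every point x ∈ C can be written uniquely as x = β + ∑_{i=1}^d c_i u_i with β ∈ Π and c_1, …, c_d nonnegative integers; that is, C is the disjoint union over c ∈ ℕ^d of the translates Π + ∑_{i=1}^d c_i u_i. -/
import Mathlib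

lemma key1 {r m : ℝ} {c : ℕ} (hm : m ∈ Set.Ioc (0:ℝ) 1) (h : r = m + c) :
    (c : ℤ) = ⌈r⌉ - 1 := by
  have : ⌈r⌉ = (c : ℤ) + 1 := by
    rw [Int.ceil_eq_iff]
    constructor
    · push_cast; nlinarith [hm.1]
    · push_cast; nlinarith [hm.2]
  omega

lemma key2 {r m : ℝ} {c : ℕ} (hm : m ∈ Set.Ico (0:ℝ) 1) (h : r = m + c) :
    (c : ℤ) = ⌊r⌋ := by
  symm
  rw [Int.floor_eq_iff]
  constructor
  · push_cast; nlinarith [hm.1]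
  · push_cast; nlinarith [hm.2]

theorem halfOpenCone_unique_decomposition
    {d : ℕ} (u : Fin d → (Fin d → ℝ)) (k : ℕ) (hk : k ≤ d)
    (hu : LinearIndependent ℝ u)
    (C : Set (Fin d → ℝ))
    (hC : C = {x | ∃ lam : Fin d → ℝ,
        (∀ i : Fin d, (i : ℕ) < k → 0 < lam i) ∧
        (∀ i : Fin d, k ≤ (i : ℕ) → 0 ≤ lam i) ∧
        x = ∑ i, lam i • u i})
    (Pp : Set (Fin d → ℝ))
    (hPp : Pp = {x | ∃ lam : Fin d → ℝ,
        (∀ i : Fin d, (i : ℕ) < k → lam i ∈ Set.Ioc (0 : ℝ) 1) ∧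
        (∀ i : Fin d, k ≤ (i : ℕ) → lam i ∈ Set.Ico (0 : ℝ) 1) ∧
        x = ∑ i, lam i • u i})
    (x : Fin d → ℝ) (hx : x ∈ C) :
    ∃! p : (Fin d → ℝ) × (Fin d → ℕ),
      p.1 ∈ Pp ∧ x = p.1 + ∑ i, (p.2 i : ℝ) • u i := by
  subst hC hPp
  obtain ⟨lam, h1, h2, hsum⟩ := hx
  -- uniqueness of coordinates
  have huniq : ∀ a b : Fin d → ℝ, (∑ i, a i • u i) = (∑ i, b i • u i) → a = b := by
    intro a b hab
    have hz : ∑ i, (a - b) i • u i = 0 := by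
      simp [sub_smul, Finset.sum_sub_distrib, hab]
    have := Fintype.linearIndependent_iff.mp hu (a - b) hz
    funext i
    have hi := this i
    simp only [Pi.sub_apply] at hi
    linarith
  set c : Fin d → ℕ := fun i =>
    if (i:ℕ) < k then (⌈lam i⌉ - 1).toNat else ⌊lam i⌋.toNat with hcdef
  have hcast : ∀ i : Fin d,
      (c i : ℤ) = if (i:ℕ) < k then ⌈lam i⌉ - 1 else ⌊lam i⌋ := by
    intro i
    by_cases hi : (i:ℕ) < k
    · have h1' : (0:ℤ) < ⌈lam i⌉ := Int.ceil_pos.mpr (h1 i hi)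
      simp [hcdef, hi]; omega
    · have h2' : (0:ℤ) ≤ ⌊lam i⌋ := Int.floor_nonneg.mpr (h2 i (le_of_not_gt hi))
      simp [hcdef, hi]; omega
  have hμ : ∀ i : Fin d,
      ((i:ℕ) < k → lam i - c i ∈ Set.Ioc (0:ℝ) 1) ∧
      (k ≤ (i:ℕ) → lam i - c i ∈ Set.Ico (0:ℝ) 1) := by
    intro i
    constructor
    · intro hi
      have hc : (c i : ℝ) = (⌈lam i⌉ : ℝ) - 1 := by
        have := hcast i; rw [if_pos hi] at this
        exact_mod_cast this
      rw [hc]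
      exact ⟨by linarith [Int.ceil_lt_add_one (lam i)], by linarith [Int.le_ceil (lam i)]⟩
    · intro hi
      have hc : (c i : ℝ) = (⌊lam i⌋ : ℝ) := by
        have := hcast i; rw [if_neg (not_lt.mpr hi)] at this
        exact_mod_cast congrArg (Int.cast : ℤ → ℝ) this
      rw [hc]
      exact ⟨by linarith [Int.floor_le (lam i)], by linarith [Int.lt_floor_add_one (lam i)]⟩
  refine ⟨(∑ i, (lam i - c i) • u i, c), ⟨⟨fun i => lam i - c i,
      fun i hi => (hμ i).1 hi, fun i hi => (hμ i).2 hi, rfl⟩, ?_⟩, ?_⟩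
  · rw [hsum, ← Finset.sum_add_distrib]
    congr 1; funext i; rw [← add_smul]; ring_nf
  · rintro ⟨β, cq⟩ ⟨⟨μ, hμ1, hμ2, hβ⟩, hxq⟩
    have hx2 : x = ∑ i, (μ i + cq i) • u i := by
      rw [hxq, hβ, ← Finset.sum_add_distrib]
      congr 1; funext i; rw [add_smul]
    have hl : lam = fun i => μ i + cq i := huniq _ _ (hsum ▸ hx2)
    have hceq : cq = c := by
      funext i
      have hli : lam i = μ i + cq i := congrFun hl i
      have hci := hcast i
      by_cases hi : (i:ℕ) < k
      · have hq := key1 (hμ1 i hi) hli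
        rw [if_pos hi] at hci
        omega
      · have hq := key2 (hμ2 i (le_of_not_gt hi)) hli
        rw [if_neg hi] at hci
        omega
    have hμeq : ∀ i, μ i = lam i - c i := by
      intro i
      have hli : lam i = μ i + cq i := congrFun hl i
      rw [hceq] at hli
      linarith
    refine Prod.ext ?_ hceq
    rw [hβ]
    exact Finset.sum_congr rfl fun i _ => by rw [hμeq i]
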